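/- arXiv:1703.06646 — 3 statements merged into one kernel-verified Lean document; each statement's English description precedes it below -/
import Mathlib

section
/- Let P = (x,0,z) with x ≠ 0 and z ≠ 0. Then the translation curve from the origin with φ = 0 (if x/(e^{-z}-1) > 0, else φ = π) and θ = arccot(∓x/(e^{-z}-1)) passes through P at parameter t = z/sin θ. -/
noncomputable def arccot (x : ℝ) : ℝ := Real.pi / 2 - Real.arctan x

lemma cot_arccot (a : ℝ) : Real.cot (arccot a) = a := by
  unfold arccot
  rw [Real.cot_eq_cos_div_sin, Real.cos_pi_div_two_sub, Real.sin_pi_div_two_sub,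
    ← Real.tan_eq_sin_div_cos, Real.tan_arctan]

lemma sin_arccot_ne_zero (a : ℝ) : Real.sin (arccot a) ≠ 0 := by
  unfold arccot
  rw [Real.sin_pi_div_two_sub]
  exact ne_of_gt (Real.cos_arctan_pos a)

theorem translation_curve_params_y_zero (x z : ℝ) (hx : x ≠ 0) (hz : z ≠ 0) :
    let q := x / (Real.exp (-z) - 1)
    let φ := if q > 0 then 0 else Real.pi
    let θ := arccot (if q > 0 then -q else q)
    let t := z / Real.sin θ
    (-(Real.cot θ) * Real.cos φ * (Real.exp (-(t * Real.sin θ)) - 1),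
     Real.cot θ * Real.sin φ * (Real.exp (t * Real.sin θ) - 1),
     t * Real.sin θ) = (x, 0, z) := by
  intro q φ θ t
  have hden : Real.exp (-z) - 1 ≠ 0 := by
    intro h
    have : Real.exp (-z) = 1 := by linarith
    rw [Real.exp_eq_one_iff, neg_eq_zero] at this
    exact hz this
  have hxq : q * (Real.exp (-z) - 1) = x := div_mul_cancel₀ x hden
  by_cases hqp : q > 0
  · have hφ : φ = 0 := if_pos hqp
    have hθ : θ = arccot (-q) := by simp only [θ, if_pos hqp]
    have hcot : Real.cot θ = -q := by rw [hθ, cot_arccot]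
    have hsin : Real.sin θ ≠ 0 := hθ ▸ sin_arccot_ne_zero (-q)
    have htz : t * Real.sin θ = z := div_mul_cancel₀ z hsin
    rw [htz, hφ, hcot]
    simp only [Real.cos_zero, Real.sin_zero, mul_one, mul_zero, zero_mul, neg_neg]
    exact congrArg (fun r => (r, (0:ℝ), z)) hxq
  · have hφ : φ = Real.pi := if_neg hqp
    have hθ : θ = arccot q := by simp only [θ, if_neg hqp]
    have hcot : Real.cot θ = q := by rw [hθ, cot_arccot]
    have hsin : Real.sin θ ≠ 0 := hθ ▸ sin_arccot_ne_zero q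
    have htz : t * Real.sin θ = z := div_mul_cancel₀ z hsin
    rw [htz, hφ, hcot]
    simp only [Real.cos_pi, Real.sin_pi, mul_zero, zero_mul, mul_neg_one, neg_neg]
    exact congrArg (fun r => (r, (0:ℝ), z)) hxq
end

section
/- Let A = (a₁,a₂,a₃) ∈ ℝ³ and let T_A⁻¹ denote the inverse Sol translation, mapping (x,y,z) to ((x-a₁)e^{a₃}, (y-a₂)e^{-a₃}, z-a₃). If the unit initial tangent vector of the translation curve from the origin to A is (u,v,w), then the unit initial tangent vector of the translation curve from the origin to T_A⁻¹(origin) = (-a₁e^{a₃}, -a₂e^{-a₃}, -a₃) is (-u,-v,-w). -/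
/-- The translation curve from the origin with initial tangent vector `p`. -/
noncomputable def solCurve (p : ℝ × ℝ × ℝ) (t : ℝ) : ℝ × ℝ × ℝ :=
  if p.2.2 = 0 then (p.1 * t, p.2.1 * t, 0)
  else (-(p.1 / p.2.2) * (Real.exp (-(p.2.2 * t)) - 1),
        (p.2.1 / p.2.2) * (Real.exp (p.2.2 * t) - 1), p.2.2 * t)

/-- `p` is the unit initial tangent vector of the translation curve from the
origin to `A`. -/
noncomputable def IsInitialTangent (p A : ℝ × ℝ × ℝ) : Prop :=
  p.1 ^ 2 + p.2.1 ^ 2 + p.2.2 ^ 2 = 1 ∧ ∃ t > (0:ℝ), solCurve p t = A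

/-- The inverse of the Sol translation carrying the origin to `A`. -/
noncomputable def solInvTrans (A q : ℝ × ℝ × ℝ) : ℝ × ℝ × ℝ :=
  ((q.1 - A.1) * Real.exp A.2.2, (q.2.1 - A.2.1) * Real.exp (-A.2.2),
    q.2.2 - A.2.2)

/-- The (Euclidean) angle between two tangent vectors at the origin. -/
noncomputable def ang (p q : ℝ × ℝ × ℝ) : ℝ :=
  Real.arccos (p.1 * q.1 + p.2.1 * q.2.1 + p.2.2 * q.2.2)

theorem tangent_antipodal (A : ℝ × ℝ × ℝ) (u v w : ℝ)
    (h : IsInitialTangent (u, v, w) A) :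
    IsInitialTangent (-u, -v, -w)
      (-A.1 * Real.exp A.2.2, -A.2.1 * Real.exp (-A.2.2), -A.2.2) := by
  obtain ⟨hn, t, ht, hC⟩ := h
  refine ⟨by ring_nf; ring_nf at hn; linarith, t, ht, ?_⟩
  subst hC
  by_cases hw : w = 0
  · subst hw
    simp [solCurve, mul_comm]
  · have hw' : -w ≠ 0 := neg_ne_zero.mpr hw
    simp only [solCurve, if_neg hw, if_neg hw']
    have h1 : Real.exp (-(w * t)) * Real.exp (w * t) = 1 := by
      rw [← Real.exp_add]; ring_nf; exact Real.exp_zero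
    refine Prod.ext ?_ (Prod.ext ?_ ?_) <;> simp <;> field_simp
    · linear_combination (-u) * h1
    · linear_combination v * h1
end

section
/- The sum of the interior angles of any translation triangle in Sol geometry is greater than or equal to π. Precisely: let A₁ be the origin, A₂, A₃ ∈ ℝ³, and for each pair let the side be the translation curve between them; define ω₁ as the angle at the origin between the initial unit tangents of the curves to A₂ and A₃, and ω₂, ω₃ as the corresponding angles after translating A₂ (resp. A₃) to the origin by the Sol translation. Then ω₁ + ω₂ + ω₃ ≥ π. -/
/-! ### Auxiliary lemmas: spherical triangle inequality for `arccos` of dot products -/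

lemma cs3 (u1 u2 u3 v1 v2 v3 : ℝ) :
    (u1*v1+u2*v2+u3*v3)^2 ≤ (u1^2+u2^2+u3^2)*(v1^2+v2^2+v3^2) := by
  nlinarith [sq_nonneg (u1*v2-u2*v1), sq_nonneg (u1*v3-u3*v1), sq_nonneg (u2*v3-u3*v2)]

lemma key (a1 a2 a3 b1 b2 b3 c1 c2 c3 : ℝ)
    (ha : a1^2+a2^2+a3^2 = 1) (hb : b1^2+b2^2+b3^2 = 1) (hc : c1^2+c2^2+c3^2 = 1) :
    ((a1*c1+a2*c2+a3*c3) - (a1*b1+a2*b2+a3*b3)*(b1*c1+b2*c2+b3*c3))^2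
      ≤ (1-(a1*b1+a2*b2+a3*b3)^2)*(1-(b1*c1+b2*c2+b3*c3)^2) := by
  set x := a1*b1+a2*b2+a3*b3 with hx
  set y := b1*c1+b2*c2+b3*c3 with hy
  have h := cs3 (a1-x*b1) (a2-x*b2) (a3-x*b3) (c1-y*b1) (c2-y*b2) (c3-y*b3)
  have e1 : (a1-x*b1)*(c1-y*b1)+(a2-x*b2)*(c2-y*b2)+(a3-x*b3)*(c3-y*b3)
      = (a1*c1+a2*c2+a3*c3) - x*y := by
    linear_combination (x*y) * hb
  have e2 : (a1-x*b1)^2+(a2-x*b2)^2+(a3-x*b3)^2 = 1 - x^2 := by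
    linear_combination ha + (x^2) * hb
  have e3 : (c1-y*b1)^2+(c2-y*b2)^2+(c3-y*b3)^2 = 1 - y^2 := by
    linear_combination hc + (y^2) * hb
  rw [e1, e2, e3] at h
  exact h

lemma dot_mem (a1 a2 a3 b1 b2 b3 : ℝ)
    (ha : a1^2+a2^2+a3^2 = 1) (hb : b1^2+b2^2+b3^2 = 1) :
    -1 ≤ a1*b1+a2*b2+a3*b3 ∧ a1*b1+a2*b2+a3*b3 ≤ 1 := by
  have h := cs3 a1 a2 a3 b1 b2 b3
  rw [ha, hb] at h
  constructor <;> nlinarith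

lemma arccos_tri (a1 a2 a3 b1 b2 b3 c1 c2 c3 : ℝ)
    (ha : a1^2+a2^2+a3^2 = 1) (hb : b1^2+b2^2+b3^2 = 1) (hc : c1^2+c2^2+c3^2 = 1) :
    Real.arccos (a1*c1+a2*c2+a3*c3) ≤
      Real.arccos (a1*b1+a2*b2+a3*b3) + Real.arccos (b1*c1+b2*c2+b3*c3) := by
  set x := a1*b1+a2*b2+a3*b3 with hx
  set y := b1*c1+b2*c2+b3*c3 with hy
  set z := a1*c1+a2*c2+a3*c3 with hz
  obtain ⟨hx1, hx2⟩ := dot_mem a1 a2 a3 b1 b2 b3 ha hb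
  obtain ⟨hy1, hy2⟩ := dot_mem b1 b2 b3 c1 c2 c3 hb hc
  by_cases h : Real.pi ≤ Real.arccos x + Real.arccos y
  · exact le_trans (Real.arccos_le_pi z) h
  push_neg at h
  have hk := key a1 a2 a3 b1 b2 b3 c1 c2 c3 ha hb hc
  rw [← hx, ← hy, ← hz] at hk
  have hS1 : (0:ℝ) ≤ 1 - x^2 := by nlinarith
  have hS2 : (0:ℝ) ≤ 1 - y^2 := by nlinarith
  have hsq : (Real.sqrt (1-x^2) * Real.sqrt (1-y^2))^2 = (1-x^2)*(1-y^2) := by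
    rw [mul_pow, Real.sq_sqrt hS1, Real.sq_sqrt hS2]
  have hSnn : 0 ≤ Real.sqrt (1-x^2) * Real.sqrt (1-y^2) :=
    mul_nonneg (Real.sqrt_nonneg _) (Real.sqrt_nonneg _)
  have hzge : x*y - Real.sqrt (1-x^2) * Real.sqrt (1-y^2) ≤ z := by
    have h' := abs_le_of_sq_le_sq' (show (z - x*y)^2 ≤ (Real.sqrt (1-x^2) * Real.sqrt (1-y^2))^2 by
      rw [hsq]; exact hk) hSnn
    linarith [h'.1]
  have hcos : Real.cos (Real.arccos x + Real.arccos y)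
      = x*y - Real.sqrt (1-x^2) * Real.sqrt (1-y^2) := by
    rw [Real.cos_add, Real.cos_arccos hx1 hx2, Real.cos_arccos hy1 hy2,
      Real.sin_arccos, Real.sin_arccos]
  have h0 : 0 ≤ Real.arccos x + Real.arccos y :=
    add_nonneg (Real.arccos_nonneg _) (Real.arccos_nonneg _)
  calc Real.arccos z ≤ Real.arccos (Real.cos (Real.arccos x + Real.arccos y)) := by
        rw [Real.arccos_eq_pi_div_two_sub_arcsin, Real.arccos_eq_pi_div_two_sub_arcsin]
        have := Real.monotone_arcsin (by rw [hcos]; exact hzge :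
          Real.cos (Real.arccos x + Real.arccos y) ≤ z)
        linarith
    _ = Real.arccos x + Real.arccos y := Real.arccos_cos h0 h.le

/-! ### Auxiliary lemmas: Sol translation curves -/

lemma exp_sub_one_ne {x : ℝ} (hx : x ≠ 0) : Real.exp x - 1 ≠ 0 := by
  intro h
  exact hx (Real.exp_injective (by rw [Real.exp_zero]; linarith))

lemma tangent_unique {p q A : ℝ × ℝ × ℝ} (hA : A ≠ 0)
    (hp : IsInitialTangent p A) (hq : IsInitialTangent q A) : p = q := by
  obtain ⟨p1, p2, p3⟩ := p
  obtain ⟨q1, q2, q3⟩ := q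
  obtain ⟨A1, A2, A3⟩ := A
  obtain ⟨hpu, t, ht, hpt⟩ := hp
  obtain ⟨hqu, s, hs, hqt⟩ := hq
  simp only [solCurve] at hpt hqt
  simp only at hpu hqu
  simp only [Prod.mk.injEq]
  by_cases hA3 : A3 = 0
  · subst hA3
    have hp3 : p3 = 0 := by
      by_contra h
      rw [if_neg h, Prod.mk.injEq, Prod.mk.injEq] at hpt
      have h3 := hpt.2.2
      rcases mul_eq_zero.mp h3 with h' | h'
      · exact h h'
      · linarith
    have hq3 : q3 = 0 := by
      by_contra h
      rw [if_neg h, Prod.mk.injEq, Prod.mk.injEq] at hqt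
      have h3 := hqt.2.2
      rcases mul_eq_zero.mp h3 with h' | h'
      · exact h h'
      · linarith
    subst hp3; subst hq3
    rw [if_pos rfl, Prod.mk.injEq, Prod.mk.injEq] at hpt hqt
    obtain ⟨e1, e2, -⟩ := hpt
    obtain ⟨f1, f2, -⟩ := hqt
    have hts : t = s := by
      have h1 : t^2 = A1^2 + A2^2 := by
        linear_combination (-(t^2)) * hpu + (p1*t+A1)*e1 + (p2*t+A2)*e2
      have h2 : s^2 = A1^2 + A2^2 := by
        linear_combination (-(s^2)) * hqu + (q1*s+A1)*f1 + (q2*s+A2)*f2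
      nlinarith
    subst hts
    exact ⟨mul_right_cancel₀ ht.ne' (e1.trans f1.symm),
           mul_right_cancel₀ ht.ne' (e2.trans f2.symm), rfl⟩
  · have hp3 : p3 ≠ 0 := by
      intro h; rw [if_pos h, Prod.mk.injEq, Prod.mk.injEq] at hpt; exact hA3 hpt.2.2.symm
    have hq3 : q3 ≠ 0 := by
      intro h; rw [if_pos h, Prod.mk.injEq, Prod.mk.injEq] at hqt; exact hA3 hqt.2.2.symm
    rw [if_neg hp3, Prod.mk.injEq, Prod.mk.injEq] at hpt
    rw [if_neg hq3, Prod.mk.injEq, Prod.mk.injEq] at hqt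
    obtain ⟨e1, e2, e3⟩ := hpt
    obtain ⟨f1, f2, f3⟩ := hqt
    rw [e3] at e1 e2
    rw [f3] at f1 f2
    set E1 := Real.exp (-A3) - 1 with hE1
    set E2 := Real.exp A3 - 1 with hE2
    have hE1' : E1 ≠ 0 := exp_sub_one_ne (neg_ne_zero.mpr hA3)
    have hE2' : E2 ≠ 0 := exp_sub_one_ne hA3
    have hp1 : p1 = -A1/E1 * p3 := by
      field_simp
      field_simp at e1
      linarith [e1]
    have hp2 : p2 = A2/E2 * p3 := by
      field_simp
      field_simp at e2
      linarith [e2]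
    have hq1 : q1 = -A1/E1 * q3 := by
      field_simp
      field_simp at f1
      linarith [f1]
    have hq2 : q2 = A2/E2 * q3 := by
      field_simp
      field_simp at f2
      linarith [f2]
    obtain ⟨a, hha⟩ : ∃ a:ℝ, a = -A1/E1 := ⟨_, rfl⟩
    obtain ⟨b, hhb⟩ : ∃ b:ℝ, b = A2/E2 := ⟨_, rfl⟩
    rw [← hha] at hp1 hq1
    rw [← hhb] at hp2 hq2
    have hpn : p3^2 * (a^2 + b^2 + 1) = 1 := by rw [hp1, hp2] at hpu; linear_combination hpu
    have hqn : q3^2 * (a^2 + b^2 + 1) = 1 := by rw [hq1, hq2] at hqu; linear_combination hqu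
    have hsq : p3^2 = q3^2 := by
      have hab : (0:ℝ) < a^2 + b^2 + 1 := by positivity
      have := hpn.trans hqn.symm
      exact mul_right_cancel₀ hab.ne' this
    have hsgn : 0 < p3 * q3 := by
      have hmul : (p3 * q3) * (t * s) = A3^2 := by
        linear_combination (q3*s)*e3 + A3*f3
      have hts : 0 < t * s := mul_pos ht hs
      have heq : p3 * q3 = A3^2 / (t*s) := by
        field_simp
        linear_combination hmul
      rw [heq]
      positivity
    have h33 : p3 = q3 := by
      rcases sq_eq_sq_iff_eq_or_eq_neg.mp hsq with h | h
      · exact h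
      · exfalso; rw [h] at hsgn; nlinarith [sq_nonneg q3]
    exact ⟨by rw [hp1, hq1, h33], by rw [hp2, hq2, h33], h33⟩

lemma tangent_rev {p A : ℝ × ℝ × ℝ} (hp : IsInitialTangent p A) :
    IsInitialTangent (-p) (solInvTrans A 0) := by
  obtain ⟨hpu, t, ht, hpt⟩ := hp
  subst hpt
  refine ⟨by simpa using hpu, t, ht, ?_⟩
  obtain ⟨p1, p2, p3⟩ := p
  simp only [solCurve, solInvTrans, Prod.neg_mk, neg_eq_zero]
  by_cases h3 : p3 = 0
  · subst h3
    rw [if_pos rfl, if_pos rfl]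
    norm_num [Real.exp_zero]
  · rw [if_neg h3, if_neg h3]
    have hE := Real.exp_ne_zero (p3 * t)
    simp only [Prod.mk.injEq, neg_mul, neg_neg, neg_div_neg_eq,
      Prod.fst_zero, Prod.snd_zero]
    refine ⟨?_, ?_, by ring⟩
    · rw [Real.exp_neg]
      field_simp
      ring
    · rw [Real.exp_neg]
      field_simp
      ring

lemma solInvTrans_zero_ne {A : ℝ × ℝ × ℝ} (hA : A ≠ 0) : solInvTrans A 0 ≠ 0 := by
  obtain ⟨A1, A2, A3⟩ := A
  simp only [solInvTrans, Prod.fst_zero, Prod.snd_zero, Ne, Prod.mk.injEq,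
    Prod.ext_iff] at hA ⊢
  intro ⟨h1, h2, h3⟩
  have h3' : A3 = 0 := by linarith
  have h1' : A1 = 0 := by
    have := Real.exp_ne_zero A3
    rcases mul_eq_zero.mp h1 with h | h
    · linarith
    · exact absurd h this
  have h2' : A2 = 0 := by
    have := Real.exp_ne_zero (-A3)
    rcases mul_eq_zero.mp h2 with h | h
    · linarith
    · exact absurd h this
  exact hA ⟨h1', h2', h3'⟩

lemma solInvTrans_ne {A B : ℝ × ℝ × ℝ} (hAB : A ≠ B) : solInvTrans A B ≠ 0 := by
  obtain ⟨A1, A2, A3⟩ := A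
  obtain ⟨B1, B2, B3⟩ := B
  simp only [solInvTrans, Ne, Prod.mk.injEq, Prod.ext_iff, Prod.fst_zero,
    Prod.snd_zero] at hAB ⊢
  intro ⟨h1, h2, h3⟩
  have h3' : B3 = A3 := by linarith
  have h1' : B1 = A1 := by
    have := Real.exp_ne_zero A3
    rcases mul_eq_zero.mp h1 with h | h
    · linarith
    · exact absurd h this
  have h2' : B2 = A2 := by
    have := Real.exp_ne_zero (-A3)
    rcases mul_eq_zero.mp h2 with h | h
    · linarith
    · exact absurd h this
  exact hAB ⟨h1'.symm, h2'.symm, h3'.symm⟩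

lemma solInvTrans_symm (A B : ℝ × ℝ × ℝ) :
    solInvTrans B A = solInvTrans (solInvTrans A B) 0 := by
  obtain ⟨A1, A2, A3⟩ := A
  obtain ⟨B1, B2, B3⟩ := B
  simp only [solInvTrans, Prod.fst_zero, Prod.snd_zero, Prod.mk.injEq]
  refine ⟨?_, ?_, by ring⟩
  · have h : Real.exp A3 * Real.exp (B3 - A3) = Real.exp B3 := by
      rw [← Real.exp_add]; ring_nf
    linear_combination (B1 - A1) * h
  · have h : Real.exp (-A3) * Real.exp (-(B3 - A3)) = Real.exp (-B3) := by
      rw [← Real.exp_add]; ring_nf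
    linear_combination (B2 - A2) * h

lemma ang_neg_left (p q : ℝ × ℝ × ℝ) : ang (-p) q = Real.pi - ang p q := by
  have h : (-p).1 * q.1 + (-p).2.1 * q.2.1 + (-p).2.2 * q.2.2
      = -(p.1 * q.1 + p.2.1 * q.2.1 + p.2.2 * q.2.2) := by
    simp; ring
  rw [ang, ang, h, Real.arccos_neg]

lemma ang_neg_neg (p q : ℝ × ℝ × ℝ) : ang (-p) (-q) = ang p q := by
  have h : (-p).1 * (-q).1 + (-p).2.1 * (-q).2.1 + (-p).2.2 * (-q).2.2
      = p.1 * q.1 + p.2.1 * q.2.1 + p.2.2 * q.2.2 := by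
    simp
  rw [ang, ang, h]

theorem translation_triangle_angle_sum_ge_pi
    (A₂ A₃ : ℝ × ℝ × ℝ) (h2 : A₂ ≠ 0) (h3 : A₃ ≠ 0) (h23 : A₂ ≠ A₃)
    (t₂ t₃ u₁ u₃ v₁ v₂ : ℝ × ℝ × ℝ)
    (ht₂ : IsInitialTangent t₂ A₂)
    (ht₃ : IsInitialTangent t₃ A₃)
    (hu₁ : IsInitialTangent u₁ (solInvTrans A₂ 0))
    (hu₃ : IsInitialTangent u₃ (solInvTrans A₂ A₃))
    (hv₁ : IsInitialTangent v₁ (solInvTrans A₃ 0))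
    (hv₂ : IsInitialTangent v₂ (solInvTrans A₃ A₂)) :
    ang t₂ t₃ + ang u₁ u₃ + ang v₁ v₂ ≥ Real.pi := by
  have hu₁' : u₁ = -t₂ := tangent_unique (solInvTrans_zero_ne h2) hu₁ (tangent_rev ht₂)
  have hv₁' : v₁ = -t₃ := tangent_unique (solInvTrans_zero_ne h3) hv₁ (tangent_rev ht₃)
  have hv₂' : v₂ = -u₃ := by
    have hr := tangent_rev hu₃
    rw [← solInvTrans_symm A₂ A₃] at hr
    exact tangent_unique (solInvTrans_ne (Ne.symm h23)) hv₂ hr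
  subst hu₁' hv₁' hv₂'
  rw [ang_neg_left t₂ u₃, ang_neg_neg t₃ u₃]
  have tri := arccos_tri t₂.1 t₂.2.1 t₂.2.2 t₃.1 t₃.2.1 t₃.2.2 u₃.1 u₃.2.1 u₃.2.2
    ht₂.1 ht₃.1 hu₃.1
  simp only [ang]
  linarith [tri]
end
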